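/- With g_{3,k} = 1_{k=0} + 2(φ(k+2) − 1_{k even} + 2 Σ_{i=1}^{⌊k/2⌋} φ(k+3−2i)) · 1_{k≥1}, one has the asymptotic g_{3,k} ~ 4 (1 + 1_{k even}) k²/π² as k → ∞ along even k and along odd k; precisely, g_{3,2j}/(2j)² → 8/π² and g_{3,2j+1}/(2j+1)² → 4/π² as j → ∞. -/

import Mathlib

open Filter

section aux
open ArithmeticFunction Finset
open scoped ArithmeticFunction.Moebius

lemma summable_mu_div_sq : Summable (fun d : ℕ => (μ d : ℝ) / (d:ℝ) ^ 2) := by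
  apply Summable.of_norm_bounded (g := fun d : ℕ => 1 / (d:ℝ)^2)
    (Real.summable_one_div_nat_pow.mpr one_lt_two)
  intro d
  rw [norm_div, norm_pow, Real.norm_natCast, Real.norm_eq_abs, ← Int.cast_abs]
  gcongr
  exact_mod_cast abs_moebius_le_one (n := d)

lemma tsum_mu_div_sq : ∑' d : ℕ, (μ d : ℝ) / (d:ℝ) ^ 2 = 6 / Real.pi ^ 2 := by
  have h2 : (1:ℝ) < (2:ℂ).re := by norm_num
  have hz := LSeries_zeta_mul_Lseries_moebius h2
  rw [LSeries_zeta_eq_riemannZeta h2, riemannZeta_two] at hz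
  have hpi2 : (Real.pi : ℂ) ^ 2 ≠ 0 := by
    simp [Real.pi_ne_zero, Complex.ofReal_ne_zero]
  have hmu : LSeries (fun n => (μ n : ℂ)) 2 = 6 / (Real.pi:ℂ)^2 := by
    rw [eq_div_iff hpi2]
    linear_combination 6 * hz
  have key : LSeries (fun n => (μ n : ℂ)) 2 = ((∑' d : ℕ, (μ d : ℝ) / (d:ℝ)^2 : ℝ) : ℂ) := by
    rw [LSeries, Complex.ofReal_tsum]
    congr 1
    ext n
    rcases eq_or_ne n 0 with rfl | hn
    · simp [LSeries.term]
    · rw [LSeries.term_of_ne_zero hn]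
      rw [show (2:ℂ) = ((2:ℕ):ℂ) by norm_num, Complex.cpow_natCast]
      push_cast
      ring
  rw [key] at hmu
  have : ((∑' d : ℕ, (μ d : ℝ) / (d:ℝ)^2 : ℝ) : ℂ) = ((6 / Real.pi^2 : ℝ) : ℂ) := by
    rw [hmu]; push_cast; ring
  exact_mod_cast this

lemma div_nat_tendsto (d : ℕ) (hd : 0 < d) :
    Tendsto (fun n : ℕ => ((n / d : ℕ) : ℝ) / (n : ℝ)) atTop (nhds (1 / d)) := by
  have h0 : Tendsto (fun n : ℕ => (d : ℝ) / (n : ℝ)) atTop (nhds 0) :=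
    Tendsto.div_atTop tendsto_const_nhds tendsto_natCast_atTop_atTop
  have h1 : Tendsto (fun n : ℕ => ((n % d : ℕ) : ℝ) / (n : ℝ)) atTop (nhds 0) := by
    apply squeeze_zero (fun n => by positivity) (g := fun n : ℕ => (d : ℝ) / n) _ h0
    intro n
    rcases Nat.eq_zero_or_pos n with rfl | hn
    · simp
    · have hn' : (0:ℝ) < n := by exact_mod_cast hn
      exact (div_le_div_iff_of_pos_right hn').mpr (by exact_mod_cast (Nat.mod_lt n hd).le)
  have key : ∀ n : ℕ, 0 < n → ((n / d : ℕ) : ℝ) / (n : ℝ)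
      = (1 - ((n % d : ℕ) : ℝ) / n) / d := by
    intro n hn
    have hn' : (n : ℝ) ≠ 0 := by positivity
    have hd' : (d : ℝ) ≠ 0 := by positivity
    have hmul : ((n / d : ℕ) : ℝ) * d = (n : ℝ) - ((n % d : ℕ) : ℝ) := by
      have h := Nat.div_add_mod n d
      have h2 : (d:ℝ) * ((n/d:ℕ):ℝ) + ((n%d:ℕ):ℝ) = (n:ℝ) := by exact_mod_cast h
      linarith
    calc ((n / d : ℕ) : ℝ) / n = (((n / d : ℕ) : ℝ) * d) / (n * d) := by
          rw [mul_div_mul_right _ _ hd']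
      _ = ((n : ℝ) - ((n % d : ℕ) : ℝ)) / (n * d) := by rw [hmul]
      _ = (((n : ℝ) - ((n % d : ℕ) : ℝ)) / n) / d := by rw [div_div]
      _ = (1 - ((n % d : ℕ) : ℝ) / n) / d := by rw [sub_div, div_self hn']
  have lim : Tendsto (fun n : ℕ => (1 - ((n % d : ℕ) : ℝ) / n) / d) atTop (nhds ((1 - 0)/d)) :=
    (tendsto_const_nhds.sub h1).div_const _
  rw [show (1:ℝ)/d = (1-0)/d by ring]
  apply lim.congr'
  filter_upwards [eventually_gt_atTop 0] with n hn
  exact (key n hn).symm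

def PhiZ (n : ℕ) : ℤ := ∑ m ∈ Icc 1 n, (Nat.totient m : ℤ)
def Tk (k : ℕ) : ℤ := ∑ q ∈ Icc 1 k, (q : ℤ)

lemma totient_eq_sum (n : ℕ) (hn : 0 < n) :
    (Nat.totient n : ℤ) = ∑ x ∈ n.divisorsAntidiagonal, μ x.1 * x.2 := by
  have := (sum_eq_iff_sum_smul_moebius_eq (R := ℤ)
      (f := fun m => (Nat.totient m : ℤ)) (g := fun m => (m : ℤ))).mp ?_ n hn
  · rw [← this]
    exact Finset.sum_congr rfl fun x _ => (zsmul_eq_mul _ _)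
  · intro m hm
    exact_mod_cast congrArg (Nat.cast : ℕ → ℤ) (Nat.sum_totient m)

lemma PhiZ_eq (n : ℕ) : PhiZ n = ∑ d ∈ Icc 1 n, μ d * Tk (n / d) := by
  unfold PhiZ Tk
  rw [Finset.sum_congr rfl (fun m hm => totient_eq_sum m (by simp at hm; omega))]
  simp_rw [Finset.mul_sum]
  rw [Finset.sum_sigma', Finset.sum_sigma']
  apply Finset.sum_bij' (i := fun (x : Σ _ : ℕ, ℕ × ℕ) _ => (⟨x.2.1, x.2.2⟩ : Σ _ : ℕ, ℕ))
    (j := fun (y : Σ _ : ℕ, ℕ) _ => (⟨y.1 * y.2, (y.1, y.2)⟩ : Σ _ : ℕ, ℕ × ℕ))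
  · rintro ⟨m, d, q⟩ h
    simp only [Finset.mem_sigma, Finset.mem_Icc, Nat.mem_divisorsAntidiagonal] at h ⊢
    obtain ⟨⟨h1, h2⟩, h3, h4⟩ := h
    have hd : 0 < d := Nat.pos_of_ne_zero (by rintro rfl; simp at h3; omega)
    have hq : 0 < q := Nat.pos_of_ne_zero (by rintro rfl; simp at h3; omega)
    have hdm : d ≤ m := h3 ▸ Nat.le_mul_of_pos_right d hq
    refine ⟨⟨hd, by omega⟩, hq, ?_⟩
    rw [Nat.le_div_iff_mul_le hd, Nat.mul_comm]
    omega
  · rintro ⟨d, q⟩ h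
    simp only [Finset.mem_sigma, Finset.mem_Icc] at h
    obtain ⟨⟨h1, h2⟩, h3, h4⟩ := h
    rw [Nat.le_div_iff_mul_le (by omega)] at h4
    have hdq : d * q ≤ n := by rw [mul_comm]; exact h4
    have hpos : 0 < d * q := Nat.mul_pos h1 h3
    simp only [Finset.mem_sigma, Finset.mem_Icc, Nat.mem_divisorsAntidiagonal]
    exact ⟨⟨hpos, hdq⟩, trivial, hpos.ne'⟩
  · rintro ⟨m, d, q⟩ h
    simp only [Finset.mem_sigma, Nat.mem_divisorsAntidiagonal] at h
    obtain ⟨_, h3, _⟩ := h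
    simp [h3]
  · rintro ⟨d, q⟩ h; rfl
  · rintro ⟨m, d, q⟩ h; rfl

lemma Tk_real (k : ℕ) : (Tk k : ℝ) = k * (k + 1) / 2 := by
  unfold Tk
  induction k with
  | zero => simp
  | succ k ih =>
    rw [Finset.sum_Icc_succ_top (by omega)]
    push_cast [ih]
    push_cast
    ring

lemma Tk_nonneg (k : ℕ) : (0:ℝ) ≤ (Tk k : ℝ) := by rw [Tk_real]; positivity

lemma Tk_le (k : ℕ) : (Tk k : ℝ) ≤ (k:ℝ)^2 := by
  rw [Tk_real]
  rcases Nat.eq_zero_or_pos k with rfl | hk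
  · norm_num
  · have : (1:ℝ) ≤ k := by exact_mod_cast hk
    nlinarith

lemma PhiZ_tendsto :
    Tendsto (fun n : ℕ => (PhiZ n : ℝ) / (n:ℝ)^2) atTop (nhds (3 / Real.pi^2)) := by
  set f : ℕ → ℕ → ℝ := fun n d => (μ d : ℝ) * (Tk (n / d) : ℝ) / (n:ℝ)^2 with hf
  have heq : ∀ᶠ n in atTop, (PhiZ n : ℝ) / (n:ℝ)^2 = ∑' d : ℕ, f n d := by
    filter_upwards [eventually_gt_atTop 0] with n hn
    rw [tsum_eq_sum (s := Icc 1 n) ?_]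
    · rw [PhiZ_eq]
      push_cast
      rw [Finset.sum_div]
    · intro d hd
      simp only [Finset.mem_Icc, not_and_or, not_le] at hd
      rcases hd with hd | hd
      · interval_cases d
        simp [hf, Tk]
      · have : n / d = 0 := Nat.div_eq_of_lt hd
        simp [hf, this, Tk]
  have hlim : Tendsto (fun n : ℕ => ∑' d : ℕ, f n d) atTop
      (nhds (∑' d : ℕ, ((μ d : ℝ) / (d:ℝ)^2) / 2)) := by
    apply tendsto_tsum_of_dominated_convergence (bound := fun d : ℕ => 1 / (d:ℝ)^2)
    · exact Real.summable_one_div_nat_pow.mpr one_lt_two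
    · intro d
      rcases Nat.eq_zero_or_pos d with rfl | hd
      · simpa [hf, Tk] using tendsto_const_nhds
      · have h1 := div_nat_tendsto d hd
        have h2 : Tendsto (fun n : ℕ => (1:ℝ) / n) atTop (nhds 0) :=
          tendsto_const_nhds.div_atTop tendsto_natCast_atTop_atTop
        have key : Tendsto (fun n : ℕ =>
            (μ d : ℝ) * ((((n/d : ℕ):ℝ)/n) * (((n/d : ℕ):ℝ)/n + 1/n)) / 2) atTop
            (nhds ((μ d : ℝ) * ((1/d) * (1/d + 0)) / 2)) := by
          exact (((tendsto_const_nhds.mul (h1.mul (h1.add h2)))).div_const 2)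
        have : (μ d : ℝ) * ((1/(d:ℝ)) * (1/(d:ℝ) + 0)) / 2 = ((μ d : ℝ) / (d:ℝ)^2) / 2 := by
          ring
        rw [this] at key
        apply key.congr'
        filter_upwards [eventually_gt_atTop 0] with n hn
        have hn' : (n:ℝ) ≠ 0 := by positivity
        rw [hf]
        simp only
        rw [Tk_real]
        have hd' : (d:ℝ) ≠ 0 := by positivity
        field_simp
    · filter_upwards [eventually_gt_atTop 0] with n hn
      intro d
      have hn' : (0:ℝ) < (n:ℝ) := by exact_mod_cast hn
      rcases Nat.eq_zero_or_pos d with rfl | hd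
      · simp [hf, Tk]
      · have hmu : |(μ d : ℝ)| ≤ 1 := by
          exact_mod_cast (abs_moebius_le_one (n := d))
        have h1 : ((n/d : ℕ) : ℝ) ≤ (n:ℝ)/(d:ℝ) := by
          rw [le_div_iff₀ (by exact_mod_cast hd)]
          exact_mod_cast Nat.div_mul_le_self n d
        have hTk : (Tk (n/d) : ℝ) ≤ ((n:ℝ)/(d:ℝ))^2 := by
          refine (Tk_le _).trans ?_
          apply pow_le_pow_left₀ (by positivity) h1
        rw [hf]
        simp only [norm_div, norm_mul, Real.norm_eq_abs]
        rw [abs_of_nonneg (Tk_nonneg _), abs_of_nonneg (by positivity : (0:ℝ) ≤ (n:ℝ)^2)]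
        calc |(μ d:ℝ)| * (Tk (n/d) : ℝ) / (n:ℝ)^2 ≤ 1 * ((n:ℝ)/(d:ℝ))^2 / (n:ℝ)^2 := by
              gcongr
              exact Tk_nonneg _
          _ = 1 / (d:ℝ)^2 := by
              field_simp
  have : ∑' d : ℕ, ((μ d : ℝ) / (d:ℝ)^2) / 2 = 3 / Real.pi^2 := by
    rw [tsum_div_const, tsum_mu_div_sq]
    ring
  rw [this] at hlim
  exact hlim.congr' (by filter_upwards [heq] with n h using h.symm)

def Ephi (n : ℕ) : ℤ := ∑ i ∈ range n, (Nat.totient (2*i+2) : ℤ)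
def Ophi (n : ℕ) : ℤ := ∑ i ∈ range n, (Nat.totient (2*i+1) : ℤ)


lemma PhiZ_succ (n : ℕ) : PhiZ (n+1) = PhiZ n + (Nat.totient (n+1) : ℤ) := by
  unfold PhiZ
  rw [Finset.sum_Icc_succ_top (by omega)]

lemma Ephi_rec (n : ℕ) : Ephi n = PhiZ n + Ephi (n / 2) := by
  induction n with
  | zero => simp [Ephi, PhiZ]
  | succ n ih =>
    have hE : Ephi (n+1) = Ephi n + (Nat.totient (2*n+2) : ℤ) := by
      unfold Ephi; rw [Finset.sum_range_succ]
    rcases Nat.even_or_odd (n+1) with ⟨t, ht⟩ | ⟨t, ht⟩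
    · -- n+1 = 2t even
      have h1 : (n+1)/2 = t := by omega
      have h2 : n/2 = t - 1 := by omega
      have htpos : 0 < t := by omega
      have hEt : Ephi t = Ephi (t-1) + (Nat.totient (2*t) : ℤ) := by
        unfold Ephi
        rw [show t = (t-1)+1 by omega, Finset.sum_range_succ]
        congr 2
      have hphi : (Nat.totient (2*n+2) : ℤ) = 2 * (Nat.totient (n+1) : ℤ) := by
        rw [show 2*n+2 = 2*(n+1) by ring]
        rw [Nat.totient_mul_of_prime_of_dvd Nat.prime_two ⟨t, by omega⟩]
        push_cast; ring
      rw [hE, ih, PhiZ_succ, h1, h2, hEt, hphi]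
      rw [show 2*t = n+1 by omega]
      ring
    · -- n+1 = 2t+1 odd
      have h1 : (n+1)/2 = n/2 := by omega
      have hodd : ¬ (2 ∣ (n+1)) := by omega
      have hphi : (Nat.totient (2*n+2) : ℤ) = (Nat.totient (n+1) : ℤ) := by
        rw [show 2*n+2 = 2*(n+1) by ring]
        rw [Nat.totient_mul (Nat.coprime_two_left.mpr ⟨t, by omega⟩)]
        simp [Nat.totient_two]
      rw [hE, ih, PhiZ_succ, h1, hphi]
      ring

lemma PhiZ_nonneg (n : ℕ) : (0:ℤ) ≤ PhiZ n :=
  Finset.sum_nonneg fun m _ => by positivity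

lemma PhiZ_le_sq (n : ℕ) : (PhiZ n : ℝ) ≤ (n:ℝ)^2 := by
  have h : PhiZ n ≤ ∑ m ∈ Icc 1 n, (m:ℤ) :=
    Finset.sum_le_sum fun m _ => by exact_mod_cast Nat.totient_le m
  have h2 : (∑ m ∈ Icc 1 n, (m:ℤ)) ≤ ∑ m ∈ Icc 1 n, (n:ℤ) :=
    Finset.sum_le_sum fun m hm => by simp at hm; exact_mod_cast hm.2
  have h3 : (∑ m ∈ Icc 1 n, (n:ℤ)) = n * n := by
    rw [Finset.sum_const, Nat.card_Icc]
    simp [mul_comm]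
  have : (PhiZ n : ℝ) ≤ ((n * n : ℤ) : ℝ) := by exact_mod_cast h.trans (h2.trans_eq h3)
  calc (PhiZ n : ℝ) ≤ ((n*n : ℤ):ℝ) := this
    _ = (n:ℝ)^2 := by push_cast; ring

lemma Ephi_tsum (n : ℕ) : (Ephi n : ℝ) = ∑' r : ℕ, (PhiZ (n / 2^r) : ℝ) := by
  induction n using Nat.strong_induction_on with
  | _ n ih =>
    rcases Nat.eq_zero_or_pos n with rfl | hn
    · simp [Ephi, PhiZ]
    · have hsupp : ∀ r ∉ Finset.range (n+1), (PhiZ (n / 2^r) : ℝ) = 0 := by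
        intro r hr
        simp only [Finset.mem_range, not_lt] at hr
        have hlt : n < 2 ^ r := by
          calc n < n + 1 := by omega
            _ ≤ 2 ^ (n+1) := (Nat.lt_two_pow_self (n := n+1)).le
            _ ≤ 2 ^ r := Nat.pow_le_pow_right (by norm_num) hr
        have : n / 2^r = 0 := Nat.div_eq_of_lt hlt
        simp [this, PhiZ]
      have hsum : Summable (fun r : ℕ => (PhiZ (n / 2^r) : ℝ)) :=
        summable_of_ne_finset_zero hsupp
      rw [Summable.tsum_eq_zero_add hsum]
      simp only [pow_zero, Nat.div_one]
      have : ∀ r : ℕ, n / 2^(r+1) = (n/2) / 2^r := by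
        intro r
        rw [Nat.div_div_eq_div_mul, pow_succ, mul_comm (2^r) 2]
      simp only [this]
      rw [← ih (n/2) (by omega)]
      rw [Ephi_rec n]
      push_cast
      ring

lemma tendsto_nat_div_const_atTop (c : ℕ) (hc : 0 < c) :
    Tendsto (fun n : ℕ => n / c) atTop atTop := by
  apply tendsto_atTop_atTop.2
  intro b
  exact ⟨b * c, fun n hn => by
    rw [Nat.le_div_iff_mul_le hc]; exact hn⟩

lemma Ephi_tendsto :
    Tendsto (fun n : ℕ => (Ephi n : ℝ) / (n:ℝ)^2) atTop (nhds (4 / Real.pi^2)) := by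
  have key : Tendsto (fun n : ℕ => ∑' r : ℕ, (PhiZ (n / 2^r) : ℝ) / (n:ℝ)^2) atTop
      (nhds (∑' r : ℕ, (3 / Real.pi^2) * ((1:ℝ)/4)^r)) := by
    apply tendsto_tsum_of_dominated_convergence (bound := fun r : ℕ => ((1:ℝ)/4)^r)
    · exact summable_geometric_of_lt_one (by norm_num) (by norm_num)
    · intro r
      have hd : 0 < 2^r := Nat.pow_pos (by norm_num)
      have h1 : Tendsto (fun n : ℕ => (PhiZ (n / 2^r) : ℝ) / ((n / 2^r : ℕ):ℝ)^2) atTop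
          (nhds (3 / Real.pi^2)) :=
        PhiZ_tendsto.comp (tendsto_nat_div_const_atTop _ hd)
      have h2 := div_nat_tendsto (2^r) hd
      rw [show ((1:ℝ)/((2^r:ℕ):ℝ)) = 1/(2:ℝ)^r by push_cast; ring] at h2
      have h3 : Tendsto (fun n : ℕ =>
          ((PhiZ (n / 2^r) : ℝ) / ((n / 2^r : ℕ):ℝ)^2) * (((n / 2^r : ℕ):ℝ)/(n:ℝ))^2)
          atTop (nhds ((3 / Real.pi^2) * ((1:ℝ)/2^r)^2)) := h1.mul (h2.pow 2)
      have heq : ((3:ℝ) / Real.pi^2) * ((1:ℝ)/2^r)^2 = (3 / Real.pi^2) * ((1:ℝ)/4)^r := by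
        congr 1
        rw [div_pow, one_pow, ← pow_mul, div_pow, one_pow]
        norm_num
        rw [mul_comm r 2, pow_mul]
        norm_num
      rw [heq] at h3
      apply h3.congr'
      filter_upwards [eventually_ge_atTop (2^r)] with n hn
      have hm : 0 < n / 2^r := Nat.one_le_div_iff hd |>.mpr hn
      have hm' : ((n / 2^r : ℕ):ℝ) ≠ 0 := by positivity
      have hn' : (n:ℝ) ≠ 0 := by
        have : 0 < n := lt_of_lt_of_le hd hn
        positivity
      field_simp
    · filter_upwards [eventually_gt_atTop 0] with n hn
      intro r
      have hn' : (0:ℝ) < n := by exact_mod_cast hn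
      have hd : 0 < 2^r := Nat.pow_pos (by norm_num)
      have h1 : ((n / 2^r : ℕ) : ℝ) ≤ (n:ℝ)/(2^r:ℝ) := by
        rw [le_div_iff₀ (by positivity)]
        exact_mod_cast Nat.div_mul_le_self n (2^r)
      have h2 : (PhiZ (n / 2^r) : ℝ) ≤ ((n:ℝ)/(2^r:ℝ))^2 :=
        (PhiZ_le_sq _).trans (by
          apply pow_le_pow_left₀ (by positivity) h1)
      rw [Real.norm_eq_abs, abs_div, abs_of_nonneg (by exact_mod_cast PhiZ_nonneg _),
        abs_of_nonneg (by positivity : (0:ℝ) ≤ (n:ℝ)^2)]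
      rw [div_le_iff₀ (by positivity)]
      calc (PhiZ (n / 2^r) : ℝ) ≤ ((n:ℝ)/(2^r:ℝ))^2 := h2
        _ = ((1:ℝ)/4)^r * (n:ℝ)^2 := by
            rw [div_pow, div_pow, one_pow, ← pow_mul]
            rw [mul_comm r 2, pow_mul]
            norm_num
            ring
  have hval : ∑' r : ℕ, ((3:ℝ) / Real.pi^2) * ((1:ℝ)/4)^r = 4 / Real.pi^2 := by
    rw [tsum_mul_left, tsum_geometric_of_lt_one (by norm_num) (by norm_num)]
    have : Real.pi ^ 2 ≠ 0 := by positivity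
    field_simp
    ring
  rw [hval] at key
  apply key.congr
  intro n
  rw [Ephi_tsum, ← tsum_div_const]

lemma Ophi_add_Ephi (n : ℕ) : Ophi n + Ephi n = PhiZ (2*n) := by
  induction n with
  | zero => simp [Ophi, Ephi, PhiZ]
  | succ n ih =>
    have : 2*(n+1) = (2*n+1)+1 := by ring
    rw [this, PhiZ_succ, show 2*n+1 = (2*n)+1 from rfl, PhiZ_succ]
    unfold Ophi Ephi
    rw [Finset.sum_range_succ, Finset.sum_range_succ]
    unfold Ophi Ephi at ih
    push_cast at ih ⊢
    rw [show 2*n+1+1 = 2*n+2 by ring]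
    linarith

lemma Ophi_tendsto :
    Tendsto (fun n : ℕ => (Ophi n : ℝ) / (n:ℝ)^2) atTop (nhds (8 / Real.pi^2)) := by
  have h2 : Tendsto (fun n : ℕ => (PhiZ (2*n) : ℝ) / ((2*n:ℕ):ℝ)^2) atTop
      (nhds (3 / Real.pi^2)) := by
    apply PhiZ_tendsto.comp
    apply tendsto_atTop_atTop.2
    intro b; exact ⟨b, fun n hn => by omega⟩
  have h3 : Tendsto (fun n : ℕ => 4 * ((PhiZ (2*n) : ℝ) / ((2*n:ℕ):ℝ)^2) - (Ephi n : ℝ)/(n:ℝ)^2)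
      atTop (nhds (4 * (3 / Real.pi^2) - 4 / Real.pi^2)) :=
    (tendsto_const_nhds.mul h2).sub Ephi_tendsto
  have hval : (4:ℝ) * (3 / Real.pi^2) - 4 / Real.pi^2 = 8 / Real.pi^2 := by ring
  rw [hval] at h3
  apply h3.congr'
  filter_upwards [eventually_gt_atTop 0] with n hn
  have hn' : (n:ℝ) ≠ 0 := by positivity
  have hO : (Ophi n : ℝ) = (PhiZ (2*n) : ℝ) - (Ephi n : ℝ) := by
    have := Ophi_add_Ephi n
    have : ((Ophi n + Ephi n : ℤ):ℝ) = ((PhiZ (2*n) : ℤ):ℝ) := by exact_mod_cast this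
    push_cast at this
    linarith
  rw [hO]
  push_cast
  field_simp
  ring

/-- `g_{3,k} = 1_{k=0} + 2(φ(k+2) − 1_{k even} + 2 ∑_{i=1}^{⌊k/2⌋} φ(k+3−2i)) · 1_{k≥1}`. -/
def g3 (k : ℕ) : ℤ :=
  if k = 0 then 1
  else 2 * ((Nat.totient (k + 2) : ℤ) - (if k % 2 = 0 then 1 else 0)
      + 2 * ∑ i ∈ Finset.Icc 1 (k / 2), (Nat.totient (k + 3 - 2 * i) : ℤ))


lemma sum_shift_even (j : ℕ) :
    ∑ i ∈ Icc 1 j, (Nat.totient (2*j + 3 - 2*i) : ℤ) = Ophi (j+1) - 1 := by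
  have h1 : ∑ i ∈ Icc 1 j, (Nat.totient (2*j + 3 - 2*i) : ℤ)
      = ∑ i ∈ range j, (Nat.totient (2*i + 3) : ℤ) := by
    apply Finset.sum_bij' (i := fun i _ => j - i) (j := fun i _ => j - i)
    · intro a ha; simp at ha ⊢; omega
    · intro a ha; simp at ha ⊢; omega
    · intro a ha; simp at ha; omega
    · intro a ha; simp at ha; omega
    · intro a ha; simp at ha
      congr 2
      omega
  rw [h1]
  unfold Ophi
  rw [Finset.sum_range_succ']
  simp [Nat.totient_one]
  apply Finset.sum_congr rfl
  intro i _
  congr 2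

lemma sum_shift_odd (j : ℕ) :
    ∑ i ∈ Icc 1 j, (Nat.totient (2*j + 4 - 2*i) : ℤ) = Ephi (j+1) - 1 := by
  have h1 : ∑ i ∈ Icc 1 j, (Nat.totient (2*j + 4 - 2*i) : ℤ)
      = ∑ i ∈ range j, (Nat.totient (2*i + 4) : ℤ) := by
    apply Finset.sum_bij' (i := fun i _ => j - i) (j := fun i _ => j - i)
    · intro a ha; simp at ha ⊢; omega
    · intro a ha; simp at ha ⊢; omega
    · intro a ha; simp at ha; omega
    · intro a ha; simp at ha; omega
    · intro a ha; simp at ha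
      congr 2
      omega
  rw [h1]
  unfold Ephi
  rw [Finset.sum_range_succ']
  simp [Nat.totient_two]
  apply Finset.sum_congr rfl
  intro i _
  congr 2

lemma g3_even (j : ℕ) (hj : 0 < j) :
    g3 (2*j) = 4 * Ophi (j+1) + 2 * (Nat.totient (2*j+2) : ℤ) - 6 := by
  unfold g3
  rw [if_neg (by omega)]
  have h2 : (2*j) % 2 = 0 := by omega
  rw [if_pos h2]
  have h3 : (2*j)/2 = j := by omega
  rw [h3]
  have h4 : ∀ i, 2*j + 3 - 2*i = 2*j + 3 - 2*i := fun _ => rfl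
  rw [show ∑ i ∈ Icc 1 j, (Nat.totient (2*j + 3 - 2*i) : ℤ)
      = Ophi (j+1) - 1 from sum_shift_even j]
  ring

lemma g3_odd (j : ℕ) :
    g3 (2*j+1) = 4 * Ephi (j+1) + 2 * (Nat.totient (2*j+3) : ℤ) - 4 := by
  unfold g3
  rw [if_neg (by omega)]
  rw [if_neg (by omega)]
  have h3 : (2*j+1)/2 = j := by omega
  rw [h3]
  have : ∑ i ∈ Icc 1 j, (Nat.totient (2*j+1 + 3 - 2*i) : ℤ)
      = Ephi (j+1) - 1 := by
    rw [← sum_shift_odd j]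
  rw [this]
  rw [show 2*j+1+2 = 2*j+3 by ring]
  ring

lemma aux_lin_div_sq : ∀ a b : ℝ, Tendsto (fun j : ℕ => (a*(j:ℝ) + b)/(j:ℝ)^2) atTop (nhds 0) := by
  intro a b
  have h1 : Tendsto (fun j : ℕ => a/(j:ℝ)) atTop (nhds 0) :=
    tendsto_const_nhds.div_atTop tendsto_natCast_atTop_atTop
  have h2 : Tendsto (fun j : ℕ => b/(j:ℝ)^2) atTop (nhds 0) :=
    tendsto_const_nhds.div_atTop ((tendsto_pow_atTop (by norm_num)).comp tendsto_natCast_atTop_atTop)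
  have := h1.add h2
  rw [add_zero] at this
  apply this.congr'
  filter_upwards [eventually_gt_atTop 0] with j hj
  have : (j:ℝ) ≠ 0 := by positivity
  field_simp

lemma ratio_tendsto_one : Tendsto (fun j : ℕ => (((j:ℕ)+1:ℕ):ℝ)/(j:ℝ)) atTop (nhds 1) := by
  have h1 : Tendsto (fun j : ℕ => 1 + 1/(j:ℝ)) atTop (nhds (1+0)) :=
    tendsto_const_nhds.add (tendsto_const_nhds.div_atTop tendsto_natCast_atTop_atTop)
  rw [add_zero] at h1
  apply h1.congr'
  filter_upwards [eventually_gt_atTop 0] with j hj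
  have : (j:ℝ) ≠ 0 := by positivity
  push_cast
  field_simp

lemma ratio_tendsto_half :
    Tendsto (fun j : ℕ => (((j:ℕ)+1:ℕ):ℝ)/((2*j+1:ℕ):ℝ)) atTop (nhds (1/2)) := by
  have h1 : Tendsto (fun j : ℕ => (1 + 1/(j:ℝ))/(2 + 1/(j:ℝ))) atTop (nhds ((1+0)/(2+0))) := by
    apply Tendsto.div
    · exact tendsto_const_nhds.add (tendsto_const_nhds.div_atTop tendsto_natCast_atTop_atTop)
    · exact tendsto_const_nhds.add (tendsto_const_nhds.div_atTop tendsto_natCast_atTop_atTop)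
    · norm_num
  rw [show ((1:ℝ)+0)/(2+0) = 1/2 by norm_num] at h1
  apply h1.congr'
  filter_upwards [eventually_gt_atTop 0] with j hj
  have hj' : (j:ℝ) ≠ 0 := by positivity
  push_cast
  rw [div_eq_div_iff (by positivity) (by positivity)]
  field_simp

lemma totient_err_tendsto (c : ℕ) (e : ℝ) :
    Tendsto (fun j : ℕ => (2*((Nat.totient (2*j+c):ℕ):ℝ) - e)/(j:ℝ)^2) atTop (nhds 0) := by
  apply squeeze_zero_norm' (a := fun j : ℕ => ((4:ℝ)*(j:ℝ) + (2*c + |e|))/(j:ℝ)^2)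
  · filter_upwards [eventually_gt_atTop 0] with j hj
    have hj' : (0:ℝ) < (j:ℝ) := by exact_mod_cast hj
    have hphi : ((Nat.totient (2*j+c):ℕ):ℝ) ≤ 2*(j:ℝ)+c := by
      exact_mod_cast Nat.totient_le (2*j+c)
    have hphi0 : (0:ℝ) ≤ ((Nat.totient (2*j+c):ℕ):ℝ) := by positivity
    have he : |e| ≥ e := le_abs_self e
    have he' : |e| ≥ -e := neg_le_abs e
    have habs : |2*((Nat.totient (2*j+c):ℕ):ℝ) - e| ≤ 4*(j:ℝ) + (2*c + |e|) := by
      rw [abs_le]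
      constructor <;> nlinarith [abs_nonneg e]
    calc ‖(2*((Nat.totient (2*j+c):ℕ):ℝ) - e)/(j:ℝ)^2‖
        = |2*((Nat.totient (2*j+c):ℕ):ℝ) - e|/(j:ℝ)^2 := by
          rw [Real.norm_eq_abs, abs_div, abs_of_nonneg (by positivity : (0:ℝ) ≤ (j:ℝ)^2)]
      _ ≤ (4*(j:ℝ) + (2*c + |e|))/(j:ℝ)^2 := by gcongr
  · exact aux_lin_div_sq 4 (2*c + |e|)

lemma ratio_tendsto_half' :
    Tendsto (fun j : ℕ => (j:ℝ)/((2*j+1:ℕ):ℝ)) atTop (nhds (1/2)) := by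
  have h1 : Tendsto (fun j : ℕ => 1/(2 + 1/(j:ℝ))) atTop (nhds (1/(2+0))) := by
    apply Tendsto.div tendsto_const_nhds
    · exact tendsto_const_nhds.add (tendsto_const_nhds.div_atTop tendsto_natCast_atTop_atTop)
    · norm_num
  rw [show (1:ℝ)/(2+0) = 1/2 by norm_num] at h1
  apply h1.congr'
  filter_upwards [eventually_gt_atTop 0] with j hj
  have hj' : (j:ℝ) ≠ 0 := by positivity
  push_cast
  rw [div_eq_div_iff (by positivity) (by positivity)]
  field_simp

lemma g3_even_tendsto :
    Tendsto (fun j : ℕ => (g3 (2 * j) : ℝ) / ((2 * j : ℕ) : ℝ) ^ 2) atTop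
      (nhds (8 / Real.pi ^ 2)) := by
  have hA : Tendsto (fun j : ℕ => (Ophi (j+1) : ℝ) / ((j+1:ℕ):ℝ)^2) atTop
      (nhds (8 / Real.pi^2)) := Ophi_tendsto.comp (tendsto_add_atTop_nat 1)
  have hB := ratio_tendsto_one
  have hC := totient_err_tendsto 2 6
  have hmain : Tendsto (fun j : ℕ =>
      ((Ophi (j+1) : ℝ) / ((j+1:ℕ):ℝ)^2) * ((((j:ℕ)+1:ℕ):ℝ)/(j:ℝ))^2
        + (1/4) * ((2*((Nat.totient (2*j+2):ℕ):ℝ) - 6)/(j:ℝ)^2))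
      atTop (nhds (8 / Real.pi^2 * 1^2 + (1/4) * 0)) :=
    (hA.mul (hB.pow 2)).add (tendsto_const_nhds.mul hC)
  rw [show (8:ℝ) / Real.pi^2 * 1^2 + (1/4) * 0 = 8 / Real.pi^2 by ring] at hmain
  apply hmain.congr'
  filter_upwards [eventually_gt_atTop 0] with j hj
  have hj' : (j:ℝ) ≠ 0 := by
    have : (0:ℝ) < (j:ℝ) := by exact_mod_cast hj
    positivity
  have hj1 : ((j+1:ℕ):ℝ) ≠ 0 := by positivity
  have hg := g3_even j hj
  have hgR : (g3 (2*j) : ℝ) = 4*(Ophi (j+1):ℝ) + 2*((Nat.totient (2*j+2):ℕ):ℝ) - 6 := by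
    exact_mod_cast congrArg (fun z : ℤ => (z:ℝ)) hg
  rw [hgR]
  push_cast
  field_simp
  ring

lemma g3_odd_tendsto :
    Tendsto (fun j : ℕ => (g3 (2 * j + 1) : ℝ) / ((2 * j + 1 : ℕ) : ℝ) ^ 2) atTop
      (nhds (4 / Real.pi ^ 2)) := by
  have hA : Tendsto (fun j : ℕ => (Ephi (j+1) : ℝ) / ((j+1:ℕ):ℝ)^2) atTop
      (nhds (4 / Real.pi^2)) := Ephi_tendsto.comp (tendsto_add_atTop_nat 1)
  have hB := ratio_tendsto_half
  have hC := totient_err_tendsto 3 4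
  have hR := ratio_tendsto_half'
  have hmain : Tendsto (fun j : ℕ =>
      4 * ((Ephi (j+1) : ℝ) / ((j+1:ℕ):ℝ)^2) * ((((j:ℕ)+1:ℕ):ℝ)/((2*j+1:ℕ):ℝ))^2
        + ((2*((Nat.totient (2*j+3):ℕ):ℝ) - 4)/(j:ℝ)^2) * ((j:ℝ)/((2*j+1:ℕ):ℝ))^2)
      atTop (nhds (4 * (4 / Real.pi^2) * (1/2)^2 + 0 * (1/2)^2)) :=
    ((tendsto_const_nhds.mul hA).mul (hB.pow 2)).add (hC.mul (hR.pow 2))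
  rw [show (4:ℝ) * (4 / Real.pi^2) * (1/2)^2 + 0 * (1/2)^2 = 4 / Real.pi^2 by ring] at hmain
  apply hmain.congr'
  filter_upwards [eventually_gt_atTop 0] with j hj
  have hj' : (j:ℝ) ≠ 0 := by
    have : (0:ℝ) < (j:ℝ) := by exact_mod_cast hj
    positivity
  have hj1 : ((j+1:ℕ):ℝ) ≠ 0 := by positivity
  have hj2 : ((2*j+1:ℕ):ℝ) ≠ 0 := by positivity
  have hg := g3_odd j
  have hgR : (g3 (2*j+1) : ℝ) = 4*(Ephi (j+1):ℝ) + 2*((Nat.totient (2*j+3):ℕ):ℝ) - 4 := by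
    exact_mod_cast congrArg (fun z : ℤ => (z:ℝ)) hg
  rw [hgR]
  push_cast
  field_simp
  ring

end aux

/-- `g_{3,k} ~ 4(1 + 1_{k even}) k²/π²` along even and odd `k`:
`g_{3,2j}/(2j)² → 8/π²` and `g_{3,2j+1}/(2j+1)² → 4/π²`. -/
theorem g3_asymptotics :
    Tendsto (fun j : ℕ => (g3 (2 * j) : ℝ) / ((2 * j : ℕ) : ℝ) ^ 2) atTop
      (nhds (8 / Real.pi ^ 2)) ∧
    Tendsto (fun j : ℕ => (g3 (2 * j + 1) : ℝ) / ((2 * j + 1 : ℕ) : ℝ) ^ 2) atTop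
      (nhds (4 / Real.pi ^ 2)) :=
  ⟨g3_even_tendsto, g3_odd_tendsto⟩
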